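/- Let I(α,β) = Σ_{i≠j} [(α_i − β_j)² + (1/2)(β_i − β_j)²], where the sum runs over ordered pairs (i,j) with i,j ∈ {0,1,2} and i ≠ j. Then for every fixed α = (α₀,α₁,α₂) ∈ ℝ³, the infimum of I(α,β) over β ∈ ℝ³ equals (3/5)·[(α₀−α₁)² + (α₁−α₂)² + (α₂−α₀)²], and this infimum is attained at exactly one point β, given by β_i = (2σ − α_i)/5 for i = 0,1,2, where σ = α₀ + α₁ + α₂. -/
import Mathlib


/-- `I(α,β) = Σ_{i≠j} [(αᵢ − βⱼ)² + (1/2)(βᵢ − βⱼ)²]`, summing over ordered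
pairs `(i,j)`, `i ≠ j`, `i, j ∈ {0,1,2}`. -/
noncomputable def cellEnergy (α β : Fin 3 → ℝ) : ℝ :=
  ∑ i : Fin 3, ∑ j : Fin 3,
    if i ≠ j then (α i - β j) ^ 2 + (1 / 2) * (β i - β j) ^ 2 else 0

lemma cellEnergy_key (α β : Fin 3 → ℝ) :
    cellEnergy α β
      = (3 / 5) * ((α 0 - α 1) ^ 2 + (α 1 - α 2) ^ 2 + (α 2 - α 0) ^ 2)
        + 2 * ((β 0 - (2 * (α 0 + α 1 + α 2) - α 0) / 5) ^ 2
             + (β 1 - (2 * (α 0 + α 1 + α 2) - α 1) / 5) ^ 2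
             + (β 2 - (2 * (α 0 + α 1 + α 2) - α 2) / 5) ^ 2)
        + (((β 0 - (2 * (α 0 + α 1 + α 2) - α 0) / 5)
            - (β 1 - (2 * (α 0 + α 1 + α 2) - α 1) / 5)) ^ 2
         + ((β 1 - (2 * (α 0 + α 1 + α 2) - α 1) / 5)
            - (β 2 - (2 * (α 0 + α 1 + α 2) - α 2) / 5)) ^ 2
         + ((β 2 - (2 * (α 0 + α 1 + α 2) - α 2) / 5)
            - (β 0 - (2 * (α 0 + α 1 + α 2) - α 0) / 5)) ^ 2) := by
  simp only [cellEnergy, Fin.sum_univ_three]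
  norm_num [Fin.ext_iff]
  ring

set_option maxHeartbeats 1000000 in
/-- For every fixed `α ∈ ℝ³`, the infimum of `I(α, ·)` over `β ∈ ℝ³` equals
`(3/5)[(α₀−α₁)² + (α₁−α₂)² + (α₂−α₀)²]`, and it is attained at exactly one
point, namely `βᵢ = (2σ − αᵢ)/5` where `σ = α₀ + α₁ + α₂`. -/
theorem cellEnergy_isLeast_and_unique_minimizer (α : Fin 3 → ℝ) :
    IsLeast (Set.range (cellEnergy α))
      ((3 / 5) * ((α 0 - α 1) ^ 2 + (α 1 - α 2) ^ 2 + (α 2 - α 0) ^ 2)) ∧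
    cellEnergy α (fun i => (2 * (α 0 + α 1 + α 2) - α i) / 5)
      = (3 / 5) * ((α 0 - α 1) ^ 2 + (α 1 - α 2) ^ 2 + (α 2 - α 0) ^ 2) ∧
    ∀ β : Fin 3 → ℝ,
      cellEnergy α β
        = (3 / 5) * ((α 0 - α 1) ^ 2 + (α 1 - α 2) ^ 2 + (α 2 - α 0) ^ 2) →
      β = fun i => (2 * (α 0 + α 1 + α 2) - α i) / 5 := by
  have hmin : cellEnergy α (fun i => (2 * (α 0 + α 1 + α 2) - α i) / 5)
      = (3 / 5) * ((α 0 - α 1) ^ 2 + (α 1 - α 2) ^ 2 + (α 2 - α 0) ^ 2) := by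
    rw [cellEnergy_key]; ring
  refine ⟨⟨⟨_, hmin⟩, ?_⟩, hmin, ?_⟩
  · rintro y ⟨β, rfl⟩
    rw [cellEnergy_key α β]
    nlinarith [sq_nonneg (β 0 - (2 * (α 0 + α 1 + α 2) - α 0) / 5),
      sq_nonneg (β 1 - (2 * (α 0 + α 1 + α 2) - α 1) / 5),
      sq_nonneg (β 2 - (2 * (α 0 + α 1 + α 2) - α 2) / 5),
      sq_nonneg ((β 0 - (2 * (α 0 + α 1 + α 2) - α 0) / 5)
            - (β 1 - (2 * (α 0 + α 1 + α 2) - α 1) / 5)),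
      sq_nonneg ((β 1 - (2 * (α 0 + α 1 + α 2) - α 1) / 5)
            - (β 2 - (2 * (α 0 + α 1 + α 2) - α 2) / 5)),
      sq_nonneg ((β 2 - (2 * (α 0 + α 1 + α 2) - α 2) / 5)
            - (β 0 - (2 * (α 0 + α 1 + α 2) - α 0) / 5))]
  · intro β hβ
    rw [cellEnergy_key α β] at hβ
    have key : 2 * ((β 0 - (2 * (α 0 + α 1 + α 2) - α 0) / 5) ^ 2
             + (β 1 - (2 * (α 0 + α 1 + α 2) - α 1) / 5) ^ 2
             + (β 2 - (2 * (α 0 + α 1 + α 2) - α 2) / 5) ^ 2)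
        + (((β 0 - (2 * (α 0 + α 1 + α 2) - α 0) / 5)
            - (β 1 - (2 * (α 0 + α 1 + α 2) - α 1) / 5)) ^ 2
         + ((β 1 - (2 * (α 0 + α 1 + α 2) - α 1) / 5)
            - (β 2 - (2 * (α 0 + α 1 + α 2) - α 2) / 5)) ^ 2
         + ((β 2 - (2 * (α 0 + α 1 + α 2) - α 2) / 5)
            - (β 0 - (2 * (α 0 + α 1 + α 2) - α 0) / 5)) ^ 2) = 0 := by linarith
    have n0 := sq_nonneg (β 0 - (2 * (α 0 + α 1 + α 2) - α 0) / 5)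
    have n1 := sq_nonneg (β 1 - (2 * (α 0 + α 1 + α 2) - α 1) / 5)
    have n2 := sq_nonneg (β 2 - (2 * (α 0 + α 1 + α 2) - α 2) / 5)
    have m0 := sq_nonneg ((β 0 - (2 * (α 0 + α 1 + α 2) - α 0) / 5)
            - (β 1 - (2 * (α 0 + α 1 + α 2) - α 1) / 5))
    have m1 := sq_nonneg ((β 1 - (2 * (α 0 + α 1 + α 2) - α 1) / 5)
            - (β 2 - (2 * (α 0 + α 1 + α 2) - α 2) / 5))
    have m2 := sq_nonneg ((β 2 - (2 * (α 0 + α 1 + α 2) - α 2) / 5)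
            - (β 0 - (2 * (α 0 + α 1 + α 2) - α 0) / 5))
    have h0 : β 0 - (2 * (α 0 + α 1 + α 2) - α 0) / 5 = 0 :=
      sq_eq_zero_iff.mp (le_antisymm (by linarith) n0)
    have h1 : β 1 - (2 * (α 0 + α 1 + α 2) - α 1) / 5 = 0 :=
      sq_eq_zero_iff.mp (le_antisymm (by linarith) n1)
    have h2 : β 2 - (2 * (α 0 + α 1 + α 2) - α 2) / 5 = 0 :=
      sq_eq_zero_iff.mp (le_antisymm (by linarith) n2)
    funext i
    fin_cases i
    · show β 0 = (2 * (α 0 + α 1 + α 2) - α 0) / 5; linarith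
    · show β 1 = (2 * (α 0 + α 1 + α 2) - α 1) / 5; linarith
    · show β 2 = (2 * (α 0 + α 1 + α 2) - α 2) / 5; linarith
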